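/- Let G be a finite simple graph on n vertices, let A, B ⊆ V(G), let F be a finite family of cliques of G, and let f > 0. Suppose there exists y : F → [0,1] such that ∑_{e ∈ F : e ∩ V(P) ≠ ∅} y(e) ≥ 1 for every A-B path P in G and ∑_{e ∈ F} y(e) ≤ f. Then there exists an (A,B)-separator S ⊆ V(G) in G with ρ*_{G,F}(S) ≤ (8 + 4·ln n)·f. -/

import Mathlib

open Finset
open scoped ENNReal

lemma aux_sum_le_sum_range_of_anti (h : ℕ → ℝ) (hanti : ∀ i j, i ≤ j → h j ≤ h i)
    (hpos : ∀ j, 0 ≤ h j) (T : Finset ℕ) :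
    ∑ j ∈ T, h j ≤ ∑ j ∈ Finset.range T.card, h j := by
  induction T using Finset.strongInduction with
  | _ T ih =>
    rcases T.eq_empty_or_nonempty with rfl | hne
    · simp
    · set t := T.max' hne with ht
      have htT : t ∈ T := T.max'_mem hne
      have hsub : T ⊆ Finset.range (t+1) := by
        intro x hx
        simpa using Nat.lt_succ_of_le (T.le_max' x hx)
      have hcard : T.card ≤ t + 1 := by
        simpa using Finset.card_le_card hsub
      have hcpos : 1 ≤ T.card := Finset.card_pos.mpr hne
      have hc1 : T.card - 1 ≤ t := by omega
      have herase : (T.erase t).card = T.card - 1 := by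
        rw [Finset.card_erase_of_mem htT]
      have hstep : ∑ j ∈ T.erase t, h j ≤ ∑ j ∈ Finset.range (T.card - 1), h j := by
        have := ih (T.erase t) (Finset.erase_ssubset htT)
        rwa [herase] at this
      have hsplit : ∑ j ∈ T, h j = h t + ∑ j ∈ T.erase t, h j :=
        (Finset.add_sum_erase T h htT).symm
      have hc' : T.card - 1 + 1 = T.card := by omega
      have hrange : ∑ j ∈ Finset.range T.card, h j
          = ∑ j ∈ Finset.range (T.card - 1), h j + h (T.card - 1) := by
        conv_lhs => rw [← hc']
        rw [Finset.sum_range_succ]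
      rw [hsplit, hrange]
      have := hanti _ _ hc1
      linarith [hstep]

lemma aux_harmonic (n : ℕ) (hn : 1 ≤ n) :
    ∑ j ∈ Finset.range (4*n), (1:ℝ)/(max (j:ℝ) 1) ≤ 3 + 1.5 * Real.log n := by
  induction n with
  | zero => omega
  | succ m ihm =>
    rcases Nat.lt_or_ge m 2 with hm2 | hm2
    · -- n = 1 or n = 2
      interval_cases m
      · -- n = 1
        norm_num [Finset.sum_range_succ]
      · -- n = 2
        have hl2 : (0.6931471803:ℝ) < Real.log 2 := Real.log_two_gt_d9
        have : ∑ j ∈ Finset.range 8, (1:ℝ)/(max (j:ℝ) 1)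
            = 1 + 1 + 1/2 + 1/3 + 1/4 + 1/5 + 1/6 + 1/7 := by
          norm_num [Finset.sum_range_succ]
        rw [this]
        norm_num
        nlinarith [hl2]
    · -- step from m ≥ 2
      have ihm' := ihm (by omega)
      have hstep4 : 4*(m+1) = 4*m + 1 + 1 + 1 + 1 := by ring
      rw [hstep4]
      rw [Finset.sum_range_succ, Finset.sum_range_succ, Finset.sum_range_succ,
        Finset.sum_range_succ]
      have hmR : (2:ℝ) ≤ (m:ℝ) := by exact_mod_cast hm2
      have hterm : ∀ i : ℕ, 4*m ≤ i → (1:ℝ)/(max (i:ℝ) 1) ≤ 1/(4*(m:ℝ)) := by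
        intro i hi
        have hiR : (4:ℝ)*(m:ℝ) ≤ (i:ℝ) := by exact_mod_cast hi
        have h1 : (1:ℝ) ≤ (i:ℝ) := by nlinarith
        rw [max_eq_left h1]
        apply one_div_le_one_div_of_le <;> nlinarith
      have h1 := hterm (4*m) (by omega)
      have h2 := hterm (4*m+1) (by omega)
      have h3 := hterm (4*m+2) (by omega)
      have h4 := hterm (4*m+3) (by omega)
      push_cast at h1 h2 h3 h4
      -- log (m+1) ≥ log m + 1/(m+1)
      have hlog : Real.log m + 1/((m:ℝ)+1) ≤ Real.log ((m:ℝ)+1) := by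
        have hmpos : (0:ℝ) < m := by linarith
        have hx : (0:ℝ) < (m:ℝ)/((m:ℝ)+1) := by positivity
        have := Real.log_le_sub_one_of_pos hx
        rw [Real.log_div (by positivity) (by positivity)] at this
        have : Real.log m - Real.log ((m:ℝ)+1) ≤ (m:ℝ)/((m:ℝ)+1) - 1 := this
        have heq : (m:ℝ)/((m:ℝ)+1) - 1 = -(1/((m:ℝ)+1)) := by field_simp; ring
        rw [heq] at this
        linarith
      have hfrac : (1:ℝ)/(m:ℝ) ≤ 1.5 * (1/((m:ℝ)+1)) := by
        rw [div_le_iff₀ (by linarith)]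
        have : (1.5:ℝ) * (1/((m:ℝ)+1)) * (m:ℝ) = 1.5*(m:ℝ)/((m:ℝ)+1) := by ring
        rw [this, le_div_iff₀ (by linarith)]
        nlinarith
      push_cast
      have h4m : (1:ℝ)/(4*(m:ℝ)) = (1/4) * (1/(m:ℝ)) := by
        field_simp
      nlinarith [ihm', hlog, hfrac]

/-- `X` is an `(A,B)`-separator in the graph `G`. -/
def gIsSeparator {β : Type*} (G : SimpleGraph β) (A B X : Finset β) : Prop :=
  ∀ a ∈ A, ∀ b ∈ B, ∀ p : G.Walk a b, p.IsPath → ∃ v ∈ p.support, v ∈ X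

/-- `ρ*_{G,F}(S)`: minimum fractional cover of `S` by the cliques in `F` (`∞` if none). -/
noncomputable def fracCliqueCover {β : Type*} [DecidableEq β] (F : Finset (Finset β))
    (S : Finset β) : ℝ≥0∞ :=
  sInf {c : ℝ≥0∞ | ∃ γ : Finset β → ℝ, (∀ e, 0 ≤ γ e ∧ γ e ≤ 1) ∧
    (∀ v ∈ S, 1 ≤ ∑ e ∈ F, if v ∈ e then γ e else 0) ∧
    c = ENNReal.ofReal (∑ e ∈ F, γ e)}

/-- From a fractional solution of the clique-blocking LP of cost at most
`f` one gets an `(A,B)`-separator `S` with `ρ*_{G,F}(S) ≤ (8 + 4 ln n)·f`. -/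
theorem clique_menger_separator {β : Type*} [Fintype β] [DecidableEq β]
    (G : SimpleGraph β) (A B : Finset β) (F : Finset (Finset β))
    (hF : ∀ e ∈ F, G.IsClique (e : Set β))
    (f : ℝ) (hf : 0 < f)
    (y : Finset β → ℝ) (hy01 : ∀ e, 0 ≤ y e ∧ y e ≤ 1)
    (hyblock : ∀ a ∈ A, ∀ b ∈ B, ∀ p : G.Walk a b, p.IsPath →
      1 ≤ ∑ e ∈ F, if (e ∩ p.support.toFinset).Nonempty then y e else 0)
    (hycost : ∑ e ∈ F, y e ≤ f) :
    ∃ S : Finset β, gIsSeparator G A B S ∧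
      fracCliqueCover F S ≤
        ENNReal.ofReal ((8 + 4 * Real.log (Fintype.card β)) * f) := by
  classical
  set n := Fintype.card β with hn
  rcases Nat.eq_zero_or_pos n with hn0 | hnpos
  · -- empty graph: empty separator
    have hempty : IsEmpty β := Fintype.card_eq_zero_iff.mp hn0
    refine ⟨∅, ?_, ?_⟩
    · intro a _ _ _ _ _
      exact absurd trivial (by exact fun _ => hempty.elim a)
    · refine le_trans (sInf_le ?_) zero_le
      exact ⟨fun _ => 0, fun e => ⟨le_refl 0, zero_le_one⟩, by simp, by simp⟩
  -- main case
  set N : ℕ := 4*n with hN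
  have hNpos : 0 < N := by omega
  set ε : ℝ := 1/(N:ℝ) with hε
  have hεpos : 0 < ε := by
    rw [hε]; positivity
  have hgap : ∀ k k' : ℕ, k < k' → (k:ℝ) * ε + ε ≤ (k':ℝ) * ε := by
    intro k k' hkk
    have h1 : (k:ℝ) + 1 ≤ (k':ℝ) := by exact_mod_cast hkk
    nlinarith [hεpos]
  set w : β → ℝ := fun v => ∑ e ∈ F, if v ∈ e then y e else 0 with hw
  have hw0 : ∀ v, 0 ≤ w v := by
    intro v
    apply Finset.sum_nonneg
    intro e _
    split <;> simp [(hy01 e).1]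
  set WS : β → Set ℝ :=
    fun v => {r | ∃ a ∈ A, ∃ q : G.Walk a v, r = ∑ u ∈ q.support.toFinset, w u} with hWS
  have hWfin : ∀ v, (WS v).Finite := by
    intro v
    apply Set.Finite.subset (Finset.finite_toSet
      ((Finset.univ.powerset).image (fun s : Finset β => ∑ u ∈ s, w u)))
    rintro r ⟨a, ha, q, rfl⟩
    simp only [Finset.coe_image, Set.mem_image, Finset.mem_coe, Finset.mem_powerset]
    exact ⟨q.support.toFinset, by simp, rfl⟩
  set d : β → ℝ := fun v => sInf (WS v) with hd
  have hdmem : ∀ v, (WS v).Nonempty → d v ∈ WS v := fun v hv => hv.csInf_mem (hWfin v)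
  have hdle : ∀ v, ∀ r ∈ WS v, d v ≤ r := fun v r hr => csInf_le (hWfin v).bddBelow hr
  have hWSnonneg : ∀ v, ∀ r ∈ WS v, 0 ≤ r := by
    rintro v r ⟨a, ha, q, rfl⟩
    exact Finset.sum_nonneg fun u _ => hw0 u
  have hd0 : ∀ v, (WS v).Nonempty → 0 ≤ d v := fun v hv => hWSnonneg v _ (hdmem v hv)
  have hAd : ∀ a ∈ A, (WS a).Nonempty ∧ d a ≤ w a := by
    intro a ha
    have hmem : w a ∈ WS a := by
      refine ⟨a, ha, SimpleGraph.Walk.nil, ?_⟩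
      simp
    exact ⟨⟨w a, hmem⟩, hdle a _ hmem⟩
  have hadjd : ∀ u v, G.Adj u v → (WS u).Nonempty → (WS v).Nonempty ∧ d v ≤ d u + w v := by
    intro u v huv hu
    obtain ⟨a, ha, q, hq⟩ := hdmem u hu
    set q' := q.concat huv with hq'
    have hsupp : q'.support.toFinset = insert v q.support.toFinset := by
      rw [hq', SimpleGraph.Walk.support_concat]
      simp [List.concat_eq_append]
    have hmem : (∑ u' ∈ q'.support.toFinset, w u') ∈ WS v := ⟨a, ha, q', rfl⟩
    have hsum : ∑ u' ∈ q'.support.toFinset, w u' ≤ d u + w v := by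
      rw [hsupp]
      by_cases hv : v ∈ q.support.toFinset
      · rw [Finset.insert_eq_self.mpr hv, ← hq]
        linarith [hw0 v]
      · rw [Finset.sum_insert hv, ← hq]
        linarith
    exact ⟨⟨_, hmem⟩, le_trans (hdle v _ hmem) hsum⟩
  have hBd : ∀ b ∈ B, (WS b).Nonempty → 1 ≤ d b := by
    intro b hb hne
    obtain ⟨a, ha, q, hq⟩ := hdmem b hne
    set T := q.support.toFinset with hT
    have hblock := hyblock a ha b hb q.bypass q.bypass_isPath
    have hsub : q.bypass.support.toFinset ⊆ T := by
      intro x hx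
      rw [List.mem_toFinset] at hx
      rw [hT, List.mem_toFinset]
      exact q.support_bypass_subset hx
    have hstep1 : ∑ e ∈ F, (if (e ∩ q.bypass.support.toFinset).Nonempty then y e else 0)
        ≤ ∑ e ∈ F, (if (e ∩ T).Nonempty then y e else 0) := by
      apply Finset.sum_le_sum
      intro e _
      by_cases hcase : (e ∩ q.bypass.support.toFinset).Nonempty
      · rw [if_pos hcase, if_pos]
        obtain ⟨x, hx⟩ := hcase
        rw [Finset.mem_inter] at hx
        exact ⟨x, Finset.mem_inter.mpr ⟨hx.1, hsub hx.2⟩⟩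
      · rw [if_neg hcase]
        by_cases h : (e ∩ T).Nonempty
        · rw [if_pos h]; exact (hy01 e).1
        · rw [if_neg h]
    have hstep2 : ∑ e ∈ F, (if (e ∩ T).Nonempty then y e else 0) ≤ ∑ u ∈ T, w u := by
      have hrw : ∑ u ∈ T, w u = ∑ e ∈ F, ∑ u ∈ T, (if u ∈ e then y e else 0) := by
        simp only [hw]
        exact Finset.sum_comm
      rw [hrw]
      apply Finset.sum_le_sum
      intro e _
      by_cases hcase : (e ∩ T).Nonempty
      · rw [if_pos hcase]
        obtain ⟨x, hx⟩ := hcase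
        rw [Finset.mem_inter] at hx
        calc y e = (if x ∈ e then y e else 0) := by rw [if_pos hx.1]
          _ ≤ ∑ u ∈ T, (if u ∈ e then y e else 0) :=
            Finset.single_le_sum (f := fun u => if u ∈ e then y e else 0) (fun u _ => by
              by_cases h : u ∈ e
              · rw [if_pos h]; exact (hy01 e).1
              · rw [if_neg h]) hx.2
      · rw [if_neg hcase]
        exact Finset.sum_nonneg fun u _ => by
          by_cases h : u ∈ e
          · rw [if_pos h]; exact (hy01 e).1
          · rw [if_neg h]
    rw [hq]
    calc (1:ℝ) ≤ _ := hblock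
      _ ≤ _ := hstep1
      _ ≤ _ := hstep2
  -- min distance over a clique
  set M : Finset β → ℝ :=
    fun e => sInf {r | ∃ v ∈ e, (WS v).Nonempty ∧ d v = r} with hM
  have hMbound : ∀ e ∈ F, ∀ v ∈ e, (WS v).Nonempty → d v - w v ≤ M e ∧ M e ≤ d v := by
    intro e he v hv hne
    have hMe : M e = sInf {r | ∃ u ∈ e, (WS u).Nonempty ∧ d u = r} := rfl
    set Se : Set ℝ := {r | ∃ u ∈ e, (WS u).Nonempty ∧ d u = r} with hSe
    have hSefin : Se.Finite := by
      apply Set.Finite.subset (e.finite_toSet.image d)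
      rintro r ⟨u, hu, _, rfl⟩
      exact ⟨u, hu, rfl⟩
    have hSene : Se.Nonempty := ⟨d v, v, hv, hne, rfl⟩
    have hmem : M e ∈ Se := by
      rw [hMe]
      exact hSene.csInf_mem hSefin
    constructor
    · rw [hMe]
      apply le_csInf hSene
      rintro r ⟨u, hu, hune, rfl⟩
      by_cases huv : u = v
      · subst huv; linarith [hw0 u]
      · have hadj : G.Adj u v := hF e he (Finset.mem_coe.mpr hu) (Finset.mem_coe.mpr hv) huv
        linarith [(hadjd u v hadj hune).2]
    · rw [hMe]
      exact csInf_le hSefin.bddBelow ⟨v, hv, hne, rfl⟩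
  -- grid points
  set t : ℕ → ℝ := fun k => (k:ℝ) * ε with ht
  set Sfin : ℕ → Finset β := fun k =>
    Finset.univ.filter (fun v => (WS v).Nonempty ∧ d v - w v ≤ t k ∧ t k < d v) with hSfin
  have hmemS : ∀ k, ∀ v, (WS v).Nonempty → d v - w v ≤ t k → t k < d v → v ∈ Sfin k := by
    intro k v h1 h2 h3
    rw [hSfin]
    simp only [Finset.mem_filter, Finset.mem_univ, true_and]
    exact ⟨h1, h2, h3⟩
  have hsep : ∀ k < N, gIsSeparator G A B (Sfin k) := by
    intro k hk a ha b hb p hp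
    have ht0 : 0 ≤ t k := mul_nonneg (Nat.cast_nonneg k) hεpos.le
    have ht1 : t k < 1 := by
      rw [ht]; dsimp only
      have hkR : (k:ℝ) < N := by exact_mod_cast hk
      have hNR : (0:ℝ) < N := by exact_mod_cast hNpos
      calc (k:ℝ) * ε < (N:ℝ) * ε := by
            apply mul_lt_mul_of_pos_right hkR hεpos
        _ = 1 := by
            rw [hε, mul_one_div, div_self hNR.ne']
    have aux : ∀ (x v2 : β) (q : G.Walk x v2), (WS x).Nonempty → d x ≤ t k →
        (∃ u ∈ q.support, u ∈ Sfin k) ∨ ((WS v2).Nonempty ∧ d v2 ≤ t k) := by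
      intro x v2 q
      induction q with
      | nil => intro h1 h2; exact Or.inr ⟨h1, h2⟩
      | @cons x' v' v2' hadj q ih =>
        intro h1 h2
        obtain ⟨h3, h4⟩ := hadjd _ _ hadj h1
        by_cases hc : d v' ≤ t k
        · rcases ih h3 hc with ⟨u, hu1, hu2⟩ | hr
          · refine Or.inl ⟨u, ?_, hu2⟩
            rw [SimpleGraph.Walk.support_cons]
            exact List.mem_cons_of_mem _ hu1
          · exact Or.inr hr
        · push_neg at hc
          refine Or.inl ⟨v', ?_, hmemS k v' h3 (by linarith) hc⟩
          rw [SimpleGraph.Walk.support_cons]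
          exact List.mem_cons_of_mem _ q.start_mem_support
    obtain ⟨hAne, hAle⟩ := hAd a ha
    by_cases hc : d a ≤ t k
    · rcases aux a b p hAne hc with ⟨u, hu1, hu2⟩ | ⟨hne2, hle2⟩
      · exact ⟨u, hu1, hu2⟩
      · exact absurd (hBd b hb hne2) (by linarith)
    · push_neg at hc
      exact ⟨a, p.start_mem_support, hmemS k a hAne (by linarith [hw0 a]) hc⟩
  -- the fractional cover candidate at level k
  set gam : ℕ → Finset β → ℝ :=
    fun k e => min 1 (y e / max |M e - t k| ε) with hgam
  have hgam01 : ∀ k e, 0 ≤ gam k e ∧ gam k e ≤ 1 := by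
    intro k e
    constructor
    · apply le_min zero_le_one
      apply div_nonneg (hy01 e).1
      exact le_trans hεpos.le (le_max_right _ _)
    · exact min_le_left _ _
  have hcov : ∀ k, (∀ v, (WS v).Nonempty → d v - w v ≤ t k → t k < d v → ε ≤ w v) →
      ∀ v ∈ Sfin k, 1 ≤ ∑ e ∈ F, if v ∈ e then gam k e else 0 := by
    intro k hgood v hvS
    rw [hSfin] at hvS
    simp only [Finset.mem_filter, Finset.mem_univ, true_and] at hvS
    obtain ⟨hne, h2, h3⟩ := hvS
    have hwv : ε ≤ w v := hgood v hne h2 h3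
    have hwpos : 0 < w v := lt_of_lt_of_le hεpos hwv
    have hkey : ∀ e ∈ F, v ∈ e → min 1 (y e / w v) ≤ gam k e := by
      intro e he hv
      obtain ⟨hM1, hM2⟩ := hMbound e he v hv hne
      have habs : |M e - t k| ≤ w v := by
        rw [abs_le]
        constructor <;> linarith
      have hmax : max |M e - t k| ε ≤ w v := max_le habs hwv
      have hmaxpos : 0 < max |M e - t k| ε := lt_of_lt_of_le hεpos (le_max_right _ _)
      have hdiv : y e / w v ≤ y e / max |M e - t k| ε :=
        div_le_div_of_nonneg_left (hy01 e).1 hmaxpos hmax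
      exact min_le_min (le_refl 1) hdiv
    by_cases hbig : ∃ e ∈ F, v ∈ e ∧ w v ≤ y e
    · obtain ⟨e0, he0, hve0, hbige⟩ := hbig
      have h1 : (1:ℝ) ≤ (if v ∈ e0 then gam k e0 else 0) := by
        rw [if_pos hve0]
        have hmin1 : min 1 (y e0 / w v) = 1 := by
          apply min_eq_left
          rw [le_div_iff₀ hwpos]
          linarith
        calc (1:ℝ) = min 1 (y e0 / w v) := hmin1.symm
          _ ≤ gam k e0 := hkey e0 he0 hve0
      calc (1:ℝ) ≤ (if v ∈ e0 then gam k e0 else 0) := h1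
        _ ≤ ∑ e ∈ F, (if v ∈ e then gam k e else 0) :=
          Finset.single_le_sum (f := fun e => if v ∈ e then gam k e else 0) (fun e _ => by
            by_cases h : v ∈ e
            · rw [if_pos h]; exact (hgam01 k e).1
            · rw [if_neg h]) he0
    · push_neg at hbig
      have heq : ∀ e ∈ F, (if v ∈ e then y e / w v else 0) ≤ (if v ∈ e then gam k e else 0) := by
        intro e he
        by_cases hv : v ∈ e
        · rw [if_pos hv, if_pos hv]
          have hlt : y e / w v ≤ 1 := by
            rw [div_le_one hwpos]
            exact (hbig e he hv).le
          calc y e / w v = min 1 (y e / w v) := (min_eq_right hlt).symm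
            _ ≤ gam k e := hkey e he hv
        · rw [if_neg hv, if_neg hv]
      have hsum1 : ∑ e ∈ F, (if v ∈ e then y e / w v else 0) = 1 := by
        have heq2 : ∑ e ∈ F, (if v ∈ e then y e / w v else 0)
            = (∑ e ∈ F, if v ∈ e then y e else 0) / w v := by
          rw [Finset.sum_div]
          apply Finset.sum_congr rfl
          intro e _
          by_cases h : v ∈ e
          · rw [if_pos h, if_pos h]
          · rw [if_neg h, if_neg h, zero_div]
        rw [heq2]
        have hwv2 : (∑ e ∈ F, if v ∈ e then y e else 0) = w v := rfl
        rw [hwv2]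
        exact div_self hwpos.ne'
      calc (1:ℝ) = ∑ e ∈ F, (if v ∈ e then y e / w v else 0) := hsum1.symm
        _ ≤ ∑ e ∈ F, (if v ∈ e then gam k e else 0) := Finset.sum_le_sum heq
  set cost : ℕ → ℝ := fun k => ∑ e ∈ F, gam k e with hcost
  have hcost0 : ∀ k, 0 ≤ cost k := by
    intro k
    exact Finset.sum_nonneg fun e _ => (hgam01 k e).1
  have hsumcost : ∑ k ∈ Finset.range N, cost k
      ≤ 8 * (n:ℝ) * (3 + 1.5 * Real.log n) * f := by
    set C : ℝ := ∑ j ∈ Finset.range N, (1:ℝ)/(max (j:ℝ) 1) with hC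
    have hCbound : C ≤ 3 + 1.5 * Real.log n := by
      rw [hC, hN]
      exact aux_harmonic n hnpos
    have hC0 : 0 ≤ C := Finset.sum_nonneg (fun j _ => by positivity)
    have hper : ∀ e ∈ F, ∑ k ∈ Finset.range N, gam k e ≤ 2 * ((y e/ε) * C) := by
      intro e he
      have hY0 : 0 ≤ y e := (hy01 e).1
      set hh : ℕ → ℝ := fun j => min 1 (y e / (ε * max (j:ℝ) 1)) with hhh
      have hhanti : ∀ i j, i ≤ j → hh j ≤ hh i := by
        intro i j hij
        apply min_le_min (le_refl 1)
        apply div_le_div_of_nonneg_left hY0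
        · exact mul_pos hεpos (lt_of_lt_of_le zero_lt_one (le_max_right _ _))
        · have hmm : max (i:ℝ) 1 ≤ max (j:ℝ) 1 :=
            max_le_max (by exact_mod_cast hij) (le_refl 1)
          exact mul_le_mul_of_nonneg_left hmm hεpos.le
      have hh0 : ∀ j, 0 ≤ hh j := by
        intro j
        apply le_min zero_le_one
        exact div_nonneg hY0
          (mul_nonneg hεpos.le (le_trans zero_le_one (le_max_right _ _)))
      have hhb : ∀ j, hh j ≤ (y e/ε) * (1/(max (j:ℝ) 1)) := by
        intro j
        refine le_trans (min_le_right _ _) (le_of_eq ?_)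
        rw [div_mul_div_comm, mul_one]
      set jn : ℕ → ℕ := fun k => ⌊|M e - t k| / ε⌋₊ with hjn
      have hjnle : ∀ k, (jn k : ℝ) * ε ≤ |M e - t k| := by
        intro k
        have h1 : (jn k : ℝ) ≤ |M e - t k| / ε :=
          Nat.floor_le (div_nonneg (abs_nonneg _) hεpos.le)
        calc (jn k : ℝ) * ε ≤ (|M e - t k| / ε) * ε := by
              apply mul_le_mul_of_nonneg_right h1 hεpos.le
          _ = |M e - t k| := div_mul_cancel₀ _ hεpos.ne'
      have hjle : ∀ k, gam k e ≤ hh (jn k) := by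
        intro k
        apply min_le_min (le_refl 1)
        apply div_le_div_of_nonneg_left hY0
        · positivity
        · have h1 : ε * max ((jn k):ℝ) 1 = max ((jn k:ℝ) * ε) ε := by
            rw [mul_comm]
            rw [max_mul_of_nonneg _ _ hεpos.le]
            simp [one_mul]
          rw [h1]
          exact max_le_max (hjnle k) (le_refl ε)
      -- key separation fact
      have hsepkey : ∀ k k' : ℕ, k < k' →
          ((k':ℝ) * ε - (k:ℝ) * ε) = ((k' - k : ℕ) : ℝ) * ε := by
        intro k k' hkk
        have : ((k' - k : ℕ) : ℝ) = (k':ℝ) - (k:ℝ) := by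
          push_cast [Nat.cast_sub hkk.le]
          ring
        rw [this]
        ring
      have hfloorsep : ∀ x x' : ℝ, 0 ≤ x → x + ε ≤ x' → ⌊x/ε⌋₊ < ⌊x'/ε⌋₊ := by
        intro x x' hx hxx
        have h1 : x/ε + 1 ≤ x'/ε := by
          have h0 : (x+ε)/ε ≤ x'/ε := by gcongr
          rw [add_div, div_self hεpos.ne'] at h0
          exact h0
        have h2 : ⌊x/ε + 1⌋₊ ≤ ⌊x'/ε⌋₊ := Nat.floor_mono h1
        rw [Nat.floor_add_one (div_nonneg hx hεpos.le)] at h2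
        omega
      have hmonoL : ∀ k k' : ℕ, k < k' → t k ≤ M e → t k' ≤ M e → jn k' < jn k := by
        intro k k' hlt hk hk'
        have hgap' := hgap k k' hlt
        have htk : t k = (k:ℝ)*ε := rfl
        have htk' : t k' = (k':ℝ)*ε := rfl
        have h1 : |M e - t k'| + ε ≤ |M e - t k| := by
          rw [abs_of_nonneg (by linarith), abs_of_nonneg (by linarith)]
          linarith
        exact hfloorsep _ _ (abs_nonneg _) h1
      have hmonoR : ∀ k k' : ℕ, k < k' → ¬(t k ≤ M e) → jn k < jn k' := by
        intro k k' hlt hk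
        push_neg at hk
        have hgap' := hgap k k' hlt
        have htk : t k = (k:ℝ)*ε := rfl
        have htk' : t k' = (k':ℝ)*ε := rfl
        have h1 : |M e - t k| + ε ≤ |M e - t k'| := by
          rw [abs_of_nonpos (by linarith), abs_of_nonpos (by linarith)]
          linarith
        exact hfloorsep _ _ (abs_nonneg _) h1
      set KL : Finset ℕ := (Finset.range N).filter (fun k => t k ≤ M e) with hKL
      set KR : Finset ℕ := (Finset.range N).filter (fun k => ¬ t k ≤ M e) with hKR
      have hinjL : Set.InjOn jn ↑KL := by
        intro k hk k' hk' heq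
        simp only [hKL, Finset.coe_filter, Set.mem_setOf_eq, Finset.mem_range] at hk hk'
        rcases lt_trichotomy k k' with h | h | h
        · have := hmonoL k k' h hk.2 hk'.2
          omega
        · exact h
        · have := hmonoL k' k h hk'.2 hk.2
          omega
      have hinjR : Set.InjOn jn ↑KR := by
        intro k hk k' hk' heq
        simp only [hKR, Finset.coe_filter, Set.mem_setOf_eq, Finset.mem_range] at hk hk'
        rcases lt_trichotomy k k' with h | h | h
        · have := hmonoR k k' h hk.2
          omega
        · exact h
        · have := hmonoR k' k h hk'.2
          omega
      have hsumside : ∀ (K : Finset ℕ), K ⊆ Finset.range N → Set.InjOn jn ↑K →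
          ∑ k ∈ K, gam k e ≤ ∑ j ∈ Finset.range N, hh j := by
        intro K hKsub hKinj
        calc ∑ k ∈ K, gam k e ≤ ∑ k ∈ K, hh (jn k) := Finset.sum_le_sum (fun k _ => hjle k)
          _ = ∑ j ∈ K.image jn, hh j := (Finset.sum_image (fun k hk k' hk' h => hKinj hk hk' h)).symm
          _ ≤ ∑ j ∈ Finset.range (K.image jn).card, hh j :=
              aux_sum_le_sum_range_of_anti hh hhanti hh0 _
          _ ≤ ∑ j ∈ Finset.range N, hh j := by
            apply Finset.sum_le_sum_of_subset_of_nonneg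
            · apply Finset.range_subset_range.mpr
              calc (K.image jn).card ≤ K.card := Finset.card_image_le
                _ ≤ N := by simpa using Finset.card_le_card hKsub
            · intro j _ _
              exact hh0 j
      have hsplit := Finset.sum_filter_add_sum_filter_not (Finset.range N)
        (fun k => t k ≤ M e) (fun k => gam k e)
      have hL := hsumside KL (Finset.filter_subset _ _) hinjL
      have hR := hsumside KR (Finset.filter_subset _ _) hinjR
      have hhsum : ∑ j ∈ Finset.range N, hh j ≤ (y e/ε) * C := by
        rw [hC, Finset.mul_sum]
        exact Finset.sum_le_sum (fun j _ => hhb j)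
      calc ∑ k ∈ Finset.range N, gam k e
          = ∑ k ∈ KL, gam k e + ∑ k ∈ KR, gam k e := hsplit.symm
        _ ≤ 2 * ((y e/ε) * C) := by linarith
    have h1 : ∑ k ∈ Finset.range N, cost k = ∑ e ∈ F, ∑ k ∈ Finset.range N, gam k e :=
      Finset.sum_comm
    have h2 : ∑ e ∈ F, ∑ k ∈ Finset.range N, gam k e ≤ ∑ e ∈ F, 2 * ((y e/ε)*C) :=
      Finset.sum_le_sum (fun e he => hper e he)
    have h3 : ∑ e ∈ F, 2*((y e/ε)*C) = (2*C/ε) * ∑ e ∈ F, y e := by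
      rw [Finset.mul_sum]
      apply Finset.sum_congr rfl
      intro e _
      ring
    have hεN : (1:ℝ)/ε = (N:ℝ) := by
      rw [hε, one_div_one_div]
    have hNR4 : (N:ℝ) = 4*(n:ℝ) := by rw [hN]; push_cast; ring
    have h4 : (2*C/ε) * ∑ e ∈ F, y e ≤ (2*C/ε) * f := by
      apply mul_le_mul_of_nonneg_left hycost
      exact div_nonneg (by linarith) hεpos.le
    have h5 : (2*C/ε) * f = 8*(n:ℝ)*C*f := by
      have he1 : 2*C/ε = 2*C*((1:ℝ)/ε) := by ring
      rw [he1, hεN, hNR4]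
      ring
    have h6 : 8*(n:ℝ)*C*f ≤ 8*(n:ℝ)*(3+1.5*Real.log n)*f := by
      have hnR : (0:ℝ) ≤ n := Nat.cast_nonneg n
      have h8 : (0:ℝ) ≤ 8*(n:ℝ) := by linarith
      have h9 := mul_le_mul_of_nonneg_left hCbound h8
      exact mul_le_mul_of_nonneg_right h9 hf.le
    rw [h1]
    linarith
  -- bad levels
  set Bad : Finset ℕ := (Finset.range N).filter
    (fun k => ∃ v, (WS v).Nonempty ∧ w v < ε ∧ d v - w v ≤ t k ∧ t k < d v) with hBad
  have hBadcard : Bad.card ≤ n := by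
    have hβne : Nonempty β := Fintype.card_pos_iff.mp (by omega)
    have hwit : ∀ k ∈ Bad, ∃ v, (WS v).Nonempty ∧ w v < ε ∧ d v - w v ≤ t k ∧ t k < d v := by
      intro k hk
      exact (Finset.mem_filter.mp hk).2
    set g : ℕ → β := fun k => if hk : k ∈ Bad then Classical.choose (hwit k hk)
      else Classical.arbitrary β with hg
    have hgspec : ∀ k ∈ Bad, (WS (g k)).Nonempty ∧ w (g k) < ε ∧
        d (g k) - w (g k) ≤ t k ∧ t k < d (g k) := by
      intro k hk
      have : g k = Classical.choose (hwit k hk) := by rw [hg]; simp [hk]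
      rw [this]
      exact Classical.choose_spec (hwit k hk)
    have hginj : Set.InjOn g ↑Bad := by
      intro k hk k' hk' heq
      by_contra hne2
      obtain ⟨h1, h2, h3, h4⟩ := hgspec k (by exact_mod_cast hk)
      obtain ⟨h1', h2', h3', h4'⟩ := hgspec k' (by exact_mod_cast hk')
      rw [heq] at h2 h3 h4
      -- both t k and t k' lie in [d v - w v, d v) with v = g k'
      have habs : |t k - t k'| < ε := by
        rw [abs_lt]
        constructor <;> linarith
      have hgap2 : ε ≤ |t k - t k'| := by
        have htk : t k = (k:ℝ)*ε := rfl
        have htk' : t k' = (k':ℝ)*ε := rfl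
        rcases Nat.lt_or_ge k k' with h | h
        · have hgap' := hgap k k' h
          rw [abs_sub_comm, abs_of_nonneg (by linarith)]
          linarith
        · have h' : k' < k := by omega
          have hgap' := hgap k' k h'
          rw [abs_of_nonneg (by linarith)]
          linarith
      linarith
    calc Bad.card = (Bad.image g).card := (Finset.card_image_of_injOn hginj).symm
      _ ≤ Finset.univ.card := Finset.card_le_card (Finset.subset_univ _)
      _ = n := by rw [Finset.card_univ]
  set Good : Finset ℕ := (Finset.range N) \ Bad with hGood
  have hGoodcard : 3*n ≤ Good.card := by
    have h1 : Bad ⊆ Finset.range N := Finset.filter_subset _ _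
    have := Finset.card_sdiff_of_subset h1
    rw [hGood, this, Finset.card_range]
    omega
  have hGoodne : Good.Nonempty := by
    rw [← Finset.card_pos]
    omega
  obtain ⟨k₀, hk₀G, hk₀min⟩ := Finset.exists_min_image Good cost hGoodne
  have hk₀N : k₀ ∈ Finset.range N := (Finset.mem_sdiff.mp hk₀G).1
  have hk₀good : ∀ v, (WS v).Nonempty → d v - w v ≤ t k₀ → t k₀ < d v → ε ≤ w v := by
    intro v h1 h2 h3
    by_contra hcon
    push_neg at hcon
    have : k₀ ∈ Bad := Finset.mem_filter.mpr ⟨hk₀N, ⟨v, h1, hcon, h2, h3⟩⟩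
    exact (Finset.mem_sdiff.mp hk₀G).2 this
  -- cost of the chosen level
  have hcostk₀ : cost k₀ ≤ (8 + 4 * Real.log n) * f := by
    have h1 : (Good.card : ℝ) * cost k₀ ≤ ∑ k ∈ Good, cost k := by
      have := Finset.card_nsmul_le_sum Good cost (cost k₀) (fun k hk => hk₀min k hk)
      simpa [nsmul_eq_mul] using this
    have h2 : ∑ k ∈ Good, cost k ≤ ∑ k ∈ Finset.range N, cost k := by
      apply Finset.sum_le_sum_of_subset_of_nonneg (Finset.sdiff_subset)
      intro k _ _
      exact hcost0 k
    have h3 : (3*(n:ℝ)) * cost k₀ ≤ (Good.card : ℝ) * cost k₀ := by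
      apply mul_le_mul_of_nonneg_right _ (hcost0 k₀)
      exact_mod_cast hGoodcard
    have h4 : (3*(n:ℝ)) * cost k₀ ≤ 8 * (n:ℝ) * (3 + 1.5 * Real.log n) * f := by
      linarith [hsumcost]
    have hnR : (0:ℝ) < n := by exact_mod_cast hnpos
    have h4' : (n:ℝ) * (3 * cost k₀) ≤ (n:ℝ) * (8*(3+1.5*Real.log n)*f) := by
      calc (n:ℝ) * (3*cost k₀) = (3*(n:ℝ))*cost k₀ := by ring
        _ ≤ 8*(n:ℝ)*(3+1.5*Real.log n)*f := h4
        _ = (n:ℝ) * (8*(3+1.5*Real.log n)*f) := by ring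
    have h5 : 3*cost k₀ ≤ 8*(3+1.5*Real.log n)*f := le_of_mul_le_mul_left h4' hnR
    linarith
  refine ⟨Sfin k₀, hsep k₀ (Finset.mem_range.mp hk₀N), ?_⟩
  refine le_trans (sInf_le ⟨gam k₀, hgam01 k₀, hcov k₀ hk₀good, rfl⟩) ?_
  exact ENNReal.ofReal_le_ofReal hcostk₀
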